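/- Let τ > 0 and a₀, a₁, b₀ be real numbers, and let Δ(s) = s² + a₁ s + a₀ + b₀ e^{−sτ}. If s₀ ∈ ℝ is a root of Δ of multiplicity at least 3 (i.e., Δ(s₀) = Δ′(s₀) = Δ″(s₀) = 0), then s₀ is a dominant root of Δ: every complex root s of Δ satisfies Re s ≤ s₀. -/

import Mathlib

open intervalIntegral

/-- The real inequality `e^x (x-1) + 1 < x² e^x / 2` for `x > 0`. -/
lemma mid_aux_real_ineq {x : ℝ} (hx : 0 < x) :
    Real.exp x * (x - 1) + 1 < x ^ 2 * Real.exp x / 2 := by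
  have hsum := Real.sum_le_exp_of_nonneg hx.le 4
  simp [Finset.sum_range_succ, Nat.factorial] at hsum
  have hquad : (0:ℝ) ≤ x ^ 2 / 2 - x + 1 := by nlinarith [sq_nonneg (x - 1)]
  nlinarith [mul_le_mul_of_nonneg_right hsum hquad, pow_pos hx 3, pow_pos hx 4,
    pow_pos hx 5]

/-- FTC identity in ℂ : `∫₀¹ t e^{wt} w² dt = e^w (w-1) + 1`. -/
lemma mid_aux_ftcC (w : ℂ) :
    ∫ t in (0:ℝ)..1, ((t:ℂ) * Complex.exp (w * t) * w ^ 2) =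
      Complex.exp w * (w - 1) + 1 := by
  have hasD : ∀ t ∈ Set.uIcc (0:ℝ) 1,
      HasDerivAt (fun t : ℝ => Complex.exp (w * t) * (w * t - 1))
        ((t:ℂ) * Complex.exp (w * t) * w ^ 2) t := by
    intro t _
    have hz : HasDerivAt (fun z : ℂ => w * z) w (t:ℂ) := by
      simpa using (hasDerivAt_id (t:ℂ)).const_mul w
    have h1 : HasDerivAt (fun z : ℂ => Complex.exp (w * z) * (w * z - 1))
        ((t:ℂ) * Complex.exp (w * (t:ℂ)) * w ^ 2) (t:ℂ) := by
      have := hz.cexp.mul (hz.sub_const 1)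
      refine this.congr_deriv ?_
      ring
    exact h1.comp_ofReal
  have hint : IntervalIntegrable (fun t : ℝ => (t:ℂ) * Complex.exp (w * t) * w ^ 2)
      MeasureTheory.volume 0 1 := by
    apply Continuous.intervalIntegrable
    fun_prop
  rw [integral_eq_sub_of_hasDerivAt hasD hint]
  simp [Complex.exp_zero]

/-- FTC identity in ℝ : `∫₀¹ t e^{xt} dt = (e^x (x-1) + 1)/x²` for `x ≠ 0`. -/
lemma mid_aux_ftcR {x : ℝ} (hx : 0 < x) :
    ∫ t in (0:ℝ)..1, (t * Real.exp (x * t)) =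
      (Real.exp x * (x - 1) + 1) / x ^ 2 := by
  have hx0 : x ≠ 0 := hx.ne'
  have hasD : ∀ t ∈ Set.uIcc (0:ℝ) 1,
      HasDerivAt (fun t : ℝ => Real.exp (x * t) * (x * t - 1) / x ^ 2)
        (t * Real.exp (x * t)) t := by
    intro t _
    have hz : HasDerivAt (fun t : ℝ => x * t) x t := by
      simpa using (hasDerivAt_id t).const_mul x
    have := (hz.exp.mul (hz.sub_const 1)).div_const (x ^ 2)
    refine this.congr_deriv ?_
    field_simp
    ring
  have hint : IntervalIntegrable (fun t : ℝ => t * Real.exp (x * t))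
      MeasureTheory.volume 0 1 := by
    apply Continuous.intervalIntegrable
    fun_prop
  rw [integral_eq_sub_of_hasDerivAt hasD hint]
  field_simp
  simp

/-- Key lemma: `e^w (w² - 2w + 2) ≠ 2` when `Re w > 0`. -/
lemma mid_aux_key {w : ℂ} (hw : 0 < w.re) :
    Complex.exp w * (w ^ 2 - 2 * w + 2) ≠ 2 := by
  intro h
  have hw0 : w ≠ 0 := by
    intro h0
    rw [h0] at hw
    simp at hw
  set x := w.re with hxdef
  -- the complex integral
  set K : ℂ := ∫ t in (0:ℝ)..1, ((t:ℂ) * Complex.exp (w * t)) with hKdef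
  have hKmul : K * w ^ 2 = Complex.exp w * (w - 1) + 1 := by
    rw [hKdef, ← intervalIntegral.integral_mul_const]
    exact mid_aux_ftcC w
  have hKval : K = Complex.exp w / 2 := by
    have h2 : w ^ 2 * K = w ^ 2 * (Complex.exp w / 2) := by
      linear_combination hKmul - (1/2) * h
    exact mul_left_cancel₀ (pow_ne_zero 2 hw0) h2
  have hnorm : ‖K‖ = Real.exp x / 2 := by
    rw [hKval, norm_div, Complex.norm_exp]
    norm_num [hxdef]
  have hbound : ‖K‖ ≤ ∫ t in (0:ℝ)..1, (t * Real.exp (x * t)) := by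
    calc ‖K‖ ≤ ∫ t in (0:ℝ)..1, ‖(t:ℂ) * Complex.exp (w * t)‖ :=
          intervalIntegral.norm_integral_le_integral_norm zero_le_one
      _ = ∫ t in (0:ℝ)..1, (t * Real.exp (x * t)) := by
          apply intervalIntegral.integral_congr
          intro t ht
          rw [Set.uIcc_of_le zero_le_one] at ht
          have ht0 : 0 ≤ t := ht.1
          simp [map_mul, Complex.norm_exp, Complex.norm_real,
            abs_of_nonneg ht0, Complex.mul_re, mul_comm, hxdef]
  rw [mid_aux_ftcR hw, hnorm] at hbound
  have hlt := mid_aux_real_ineq hw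
  have hx2 : (0:ℝ) < x ^ 2 := by positivity
  rw [div_le_div_iff₀ (by norm_num) hx2] at hbound
  nlinarith

/-- MID property for `n = 2`, `m = 0`: if `s₀ ∈ ℝ` is a root of multiplicity at
least `3` of `Δ(s) = s² + a₁ s + a₀ + b₀ e^{-sτ}` with `τ > 0`, then `s₀` is a
dominant root: every complex root `s` of `Δ` satisfies `Re s ≤ s₀`. -/
theorem mid_dominancy_n2_m0 (τ a₀ a₁ b₀ : ℝ) (hτ : 0 < τ) (s₀ : ℝ)
    (hmult : ∀ k ≤ 2,
      iteratedDeriv k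
        (fun s : ℂ => s ^ 2 + (a₁ : ℂ) * s + (a₀ : ℂ) +
          (b₀ : ℂ) * Complex.exp (-s * τ)) (s₀ : ℂ) = 0) :
    ∀ s : ℂ, s ^ 2 + (a₁ : ℂ) * s + (a₀ : ℂ) + (b₀ : ℂ) * Complex.exp (-s * τ) = 0 →
      s.re ≤ s₀ := by
  intro s hs
  by_contra hcon
  push_neg at hcon
  -- derivatives of Δ
  have hexp : ∀ z : ℂ, HasDerivAt (fun z : ℂ => Complex.exp (-z * τ))
      (Complex.exp (-z * τ) * (-(τ:ℂ))) z := by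
    intro z
    have hlin : HasDerivAt (fun z : ℂ => -z * (τ:ℂ)) (-(τ:ℂ)) z := by
      simpa using ((hasDerivAt_id z).neg.mul_const (τ:ℂ))
    exact hlin.cexp
  have hD : ∀ z : ℂ, HasDerivAt
      (fun s : ℂ => s ^ 2 + (a₁ : ℂ) * s + (a₀ : ℂ) + (b₀ : ℂ) * Complex.exp (-s * τ))
      (2 * z + (a₁:ℂ) - (b₀:ℂ) * τ * Complex.exp (-z * τ)) z := by
    intro z
    have h1 : HasDerivAt (fun z : ℂ => z ^ 2) (2 * z) z := by
      simpa using hasDerivAt_pow 2 z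
    have h2 : HasDerivAt (fun z : ℂ => (a₁:ℂ) * z) (a₁:ℂ) z := by
      simpa using (hasDerivAt_id z).const_mul (a₁:ℂ)
    have h4 := (hexp z).const_mul (b₀:ℂ)
    have := ((h1.add h2).add_const (a₀:ℂ)).add h4
    refine this.congr_deriv ?_
    ring
  have hD2 : ∀ z : ℂ, HasDerivAt
      (fun z : ℂ => 2 * z + (a₁:ℂ) - (b₀:ℂ) * τ * Complex.exp (-z * τ))
      (2 + (b₀:ℂ) * τ ^ 2 * Complex.exp (-z * τ)) z := by
    intro z
    have h1 : HasDerivAt (fun z : ℂ => 2 * z) (2:ℂ) z := by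
      simpa using (hasDerivAt_id z).const_mul (2:ℂ)
    have h4 := (hexp z).const_mul ((b₀:ℂ) * τ)
    have := (h1.add_const (a₁:ℂ)).sub h4
    refine this.congr_deriv ?_
    ring
  -- the three equations
  have E0 : (s₀:ℂ) ^ 2 + (a₁:ℂ) * s₀ + (a₀:ℂ) + (b₀:ℂ) * Complex.exp (-(s₀:ℂ) * τ) = 0 := by
    simpa using hmult 0 (by norm_num)
  have E1 : 2 * (s₀:ℂ) + (a₁:ℂ) - (b₀:ℂ) * τ * Complex.exp (-(s₀:ℂ) * τ) = 0 := by
    have h1 := hmult 1 (by norm_num)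
    rw [iteratedDeriv_one] at h1
    rw [← (hD (s₀:ℂ)).deriv]
    exact h1
  have E2 : 2 + (b₀:ℂ) * τ ^ 2 * Complex.exp (-(s₀:ℂ) * τ) = 0 := by
    have h2 := hmult 2 (by norm_num)
    rw [show (2:ℕ) = 1 + 1 from rfl, iteratedDeriv_succ, iteratedDeriv_one] at h2
    have hfun : deriv (fun s : ℂ => s ^ 2 + (a₁ : ℂ) * s + (a₀ : ℂ) +
        (b₀ : ℂ) * Complex.exp (-s * τ)) =
        fun z : ℂ => 2 * z + (a₁:ℂ) - (b₀:ℂ) * τ * Complex.exp (-z * τ) :=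
      funext fun z => (hD z).deriv
    rw [hfun] at h2
    rw [← (hD2 (s₀:ℂ)).deriv]
    exact h2
  -- shift to w
  set w : ℂ := (τ:ℂ) * (s - (s₀:ℂ)) with hwdef
  set F : ℂ := Complex.exp (-w) with hFdef
  have hsEF : s ^ 2 + (a₁:ℂ) * s + (a₀:ℂ) +
      (b₀:ℂ) * (Complex.exp (-(s₀:ℂ) * τ) * F) = 0 := by
    rw [hFdef, hwdef, ← Complex.exp_add]
    rw [show (-(s₀:ℂ) * τ + -((τ:ℂ) * (s - (s₀:ℂ)))) = -s * τ by ring]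
    exact hs
  have hw : w ^ 2 - 2 * w + 2 = 2 * F := by
    rw [hwdef]
    linear_combination (τ:ℂ) ^ 2 * hsEF - (τ:ℂ) ^ 2 * E0 -
      (τ:ℂ) ^ 2 * (s - (s₀:ℂ)) * E1 +
      (1 - F - (τ:ℂ) * (s - (s₀:ℂ))) * E2
  have hGF : Complex.exp w * F = 1 := by
    rw [hFdef, ← Complex.exp_add]
    simp
  have hroot : Complex.exp w * (w ^ 2 - 2 * w + 2) = 2 := by
    linear_combination Complex.exp w * hw + 2 * hGF
  have hwre : 0 < w.re := by
    rw [hwdef]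
    have : ((τ:ℂ) * (s - (s₀:ℂ))).re = τ * (s.re - s₀) := by
      simp [Complex.mul_re]
    rw [this]
    have := sub_pos.mpr hcon
    positivity
  exact mid_aux_key hwre hroot
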